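/- Let z₋, z₊ ∈ ℝ with 0 < z₋ < z₊. Then ∫₀^{z₋} √(z₊−z) dz / (√z · √(z₋−z)) = π·√z₊ · F(1/2, −1/2; 1; z₋/z₊). -/

import Mathlib

/-- The Pochhammer symbol `(q)_k = q(q+1)⋯(q+k−1)`. -/
noncomputable def poch (q : ℝ) (k : ℕ) : ℝ := ∏ i ∈ Finset.range k, (q + (i : ℝ))

/-- The Gauss hypergeometric series `F(a,b;c;x) = Σ_n (a)_n (b)_n / ((c)_n n!) xⁿ`. -/
noncomputable def gaussF (a b c x : ℝ) : ℝ :=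
  ∑' n : ℕ, poch a n * poch b n / (poch c n * (n.factorial : ℝ)) * x ^ n

noncomputable def cc (n : ℕ) : ℝ := poch (-(1/2)) n / n.factorial

lemma poch_zero (q : ℝ) : poch q 0 = 1 := by simp [poch]

lemma poch_succ (q : ℝ) (n : ℕ) : poch q (n+1) = poch q n * (q + n) := by
  simp [poch, Finset.prod_range_succ]

lemma poch_one (n : ℕ) : poch 1 n = n.factorial := by
  induction n with
  | zero => simp [poch]
  | succ n ih => rw [poch_succ, ih, Nat.factorial_succ]; push_cast; ring

lemma poch_half_pos (n : ℕ) : 0 < poch (1/2) n := by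
  induction n with
  | zero => simp [poch_zero]
  | succ n ih => rw [poch_succ]; positivity

lemma poch_half_le_factorial (n : ℕ) : poch (1/2) n ≤ n.factorial := by
  induction n with
  | zero => simp [poch_zero]
  | succ n ih =>
    rw [poch_succ, Nat.factorial_succ]
    push_cast
    have h1 : (1:ℝ)/2 + n ≤ n + 1 := by linarith
    have := (poch_half_pos n).le
    have hf : (0:ℝ) < n.factorial := by exact_mod_cast n.factorial_pos
    nlinarith

lemma cc_zero : cc 0 = 1 := by simp [cc, poch_zero]

lemma cc_succ (n : ℕ) : cc (n+1) = cc n * ((n:ℝ) - 1/2) / (n+1) := by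
  have h : ((n+1).factorial : ℝ) = (n.factorial : ℝ) * (n+1) := by
    rw [Nat.factorial_succ]; push_cast; ring
  have hf : (n.factorial : ℝ) ≠ 0 := Nat.cast_ne_zero.mpr n.factorial_ne_zero
  rw [cc, cc, poch_succ, h]
  field_simp
  ring

lemma abs_cc_succ (n : ℕ) : |cc (n+1+1)| = |cc (n+1)| * ((n:ℝ) + 1/2) / (n+2) := by
  rw [cc_succ (n+1)]
  rw [abs_div, abs_mul]
  push_cast
  rw [abs_of_nonneg (by have : (0:ℝ) ≤ (n:ℝ) := n.cast_nonneg; linarith : (0:ℝ) ≤ (n:ℝ) + 1 - 1/2),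
      abs_of_nonneg (by positivity : (0:ℝ) ≤ (n:ℝ) + 1 + 1)]
  ring_nf

lemma abs_cc_one : |cc 1| = 1/2 := by
  rw [cc_succ 0, cc_zero]; norm_num

lemma cc_partial (N : ℕ) :
    ∑ n ∈ Finset.range N, |cc (n+1)| + (2*(N:ℝ)+2) * |cc (N+1)| = 1 := by
  induction N with
  | zero => simp [abs_cc_one]
  | succ N ih =>
    rw [Finset.sum_range_succ]
    have h := abs_cc_succ N
    push_cast
    push_cast at ih
    rw [h]
    field_simp
    nlinarith [ih]

lemma sum_abs_cc_le (N : ℕ) : ∑ n ∈ Finset.range N, |cc (n+1)| ≤ 1 := by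
  have := cc_partial N
  nlinarith [abs_nonneg (cc (N+1))]

lemma abs_cc_le_one (n : ℕ) : |cc n| ≤ 1 := by
  cases n with
  | zero => simp [cc_zero]
  | succ n =>
    have h := cc_partial n
    have h2 : (0:ℝ) ≤ ∑ k ∈ Finset.range n, |cc (k+1)| :=
      Finset.sum_nonneg fun _ _ => abs_nonneg _
    nlinarith [abs_nonneg (cc (n+1))]

noncomputable def VV (n : ℕ) : ℝ := ∑ k ∈ Finset.range (n+1), cc k * cc (n - k)

lemma sym_sum (n : ℕ) :
    2 * ∑ k ∈ Finset.range (n+1), (k:ℝ) * (cc k * cc (n-k)) = (n:ℝ) * VV n := by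
  have h := Finset.sum_range_reflect (fun k => (k:ℝ) * (cc k * cc (n-k))) (n+1)
  simp only [Nat.add_sub_cancel] at h
  have h2 : ∑ j ∈ Finset.range (n+1), ((n:ℝ) - (j:ℝ)) * (cc j * cc (n-j))
      = ∑ k ∈ Finset.range (n+1), (k:ℝ) * (cc k * cc (n-k)) := by
    rw [← h]
    refine Finset.sum_congr rfl fun j hj => ?_
    have hjn : j ≤ n := Nat.lt_succ_iff.mp (Finset.mem_range.mp hj)
    have e1 : n - (n - j) = j := Nat.sub_sub_self hjn
    have e2 : ((n - j : ℕ) : ℝ) = (n:ℝ) - (j:ℝ) := by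
      rw [Nat.cast_sub hjn]
    rw [e1, e2]
    ring
  have h3 : ∑ j ∈ Finset.range (n+1), ((n:ℝ) - (j:ℝ)) * (cc j * cc (n-j))
      + ∑ k ∈ Finset.range (n+1), (k:ℝ) * (cc k * cc (n-k))
      = (n:ℝ) * VV n := by
    rw [← Finset.sum_add_distrib, VV, Finset.mul_sum]
    refine Finset.sum_congr rfl fun j hj => by ring
  linarith [h3, h2]

lemma VV_rec (n : ℕ) : ((n:ℝ)+1) * VV (n+1) = ((n:ℝ) - 1) * VV n := by
  have hsym := sym_sum (n+1)
  push_cast at hsym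
  -- W := ∑ k ∈ range (n+2), k * cc k * cc (n+1-k)
  have hW : ∑ k ∈ Finset.range (n+2), (k:ℝ) * (cc k * cc (n+1-k))
      = ∑ i ∈ Finset.range (n+1), ((i:ℝ)+1) * (cc (i+1) * cc (n-i)) := by
    rw [Finset.sum_range_succ' (fun k => (k:ℝ) * (cc k * cc (n+1-k))) (n+1)]
    simp
  have hstep : ∀ i : ℕ, ((i:ℝ)+1) * cc (i+1) = cc i * ((i:ℝ) - 1/2) := by
    intro i
    rw [cc_succ]
    field_simp
  have hW2 : ∑ i ∈ Finset.range (n+1), ((i:ℝ)+1) * (cc (i+1) * cc (n-i))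
      = ∑ i ∈ Finset.range (n+1), (i:ℝ) * (cc i * cc (n-i)) - (1/2) * VV n := by
    rw [VV, Finset.mul_sum, ← Finset.sum_sub_distrib]
    refine Finset.sum_congr rfl fun i hi => ?_
    calc ((i:ℝ)+1) * (cc (i+1) * cc (n-i)) = (((i:ℝ)+1) * cc (i+1)) * cc (n-i) := by ring
      _ = (cc i * ((i:ℝ) - 1/2)) * cc (n-i) := by rw [hstep i]
      _ = (i:ℝ) * (cc i * cc (n-i)) - 1/2 * (cc i * cc (n-i)) := by ring
  have hsymn := sym_sum n
  rw [hW, hW2] at hsym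
  have : VV (n+1) = ∑ k ∈ Finset.range (n+2), cc k * cc (n+1-k) := rfl
  linarith [hsym, hsymn]

lemma VV_zero : VV 0 = 1 := by simp [VV, cc_zero]

lemma cc_one : cc 1 = -(1/2) := by
  have := cc_succ 0
  rw [cc_zero] at this
  norm_num at this
  simpa using this

lemma VV_one : VV 1 = -1 := by
  simp [VV, Finset.sum_range_succ, cc_zero, cc_one]
  norm_num

lemma VV_eq_zero {n : ℕ} (hn : 2 ≤ n) : VV n = 0 := by
  induction n with
  | zero => omega
  | succ n ih =>
    rcases Nat.lt_or_ge n 2 with h | h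
    · interval_cases n
      · omega
      · have := VV_rec 1
        push_cast at this
        linarith
    · have h0 := VV_rec n
      have h2 := ih h
      rw [h2, mul_zero] at h0
      have : (0:ℝ) < (n:ℝ) + 1 := by positivity
      have := mul_eq_zero.mp h0
      rcases this with h' | h'
      · linarith
      · exact h'

lemma summable_norm_cc_pow {x : ℝ} (hx : |x| < 1) :
    Summable (fun n => ‖cc n * x^n‖) := by
  refine Summable.of_nonneg_of_le (fun n => norm_nonneg _) (fun n => ?_)
    (summable_geometric_of_lt_one (abs_nonneg x) hx)
  rw [norm_mul, norm_pow]
  calc ‖cc n‖ * ‖x‖^n ≤ 1 * ‖x‖^n := by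
        apply mul_le_mul_of_nonneg_right _ (by positivity)
        simpa [Real.norm_eq_abs] using abs_cc_le_one n
    _ = |x|^n := by rw [one_mul, Real.norm_eq_abs]

lemma tsum_cc_sq {x : ℝ} (hx : |x| < 1) :
    (∑' n, cc n * x^n) * (∑' n, cc n * x^n) = 1 - x := by
  rw [tsum_mul_tsum_eq_tsum_sum_range_of_summable_norm (summable_norm_cc_pow hx)
    (summable_norm_cc_pow hx)]
  have key : ∀ n : ℕ, ∑ k ∈ Finset.range (n+1), cc k * x^k * (cc (n-k) * x^(n-k))
      = VV n * x^n := by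
    intro n
    rw [VV, Finset.sum_mul]
    refine Finset.sum_congr rfl fun k hk => ?_
    have hkn : k ≤ n := Nat.lt_succ_iff.mp (Finset.mem_range.mp hk)
    have : x^k * x^(n-k) = x^n := by
      rw [← pow_add, Nat.add_sub_cancel' hkn]
    rw [← this]
    ring
  simp_rw [key]
  rw [tsum_eq_sum (s := Finset.range 2) (fun n hn => by
    rw [VV_eq_zero (Nat.not_lt.mp (by simpa using hn)), zero_mul])]
  rw [Finset.sum_range_succ, Finset.sum_range_one, VV_zero, VV_one]
  ring

lemma summable_cc_pow {x : ℝ} (hx : |x| < 1) : Summable (fun n => cc n * x^n) :=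
  (summable_norm_cc_pow hx).of_norm

lemma tsum_cc_pos {x : ℝ} (h0 : 0 ≤ x) (h1 : x < 1) : 0 < ∑' n, cc n * x^n := by
  have hx : |x| < 1 := by rw [abs_of_nonneg h0]; exact h1
  rw [Summable.tsum_eq_zero_add (summable_cc_pow hx)]
  rw [cc_zero, pow_zero, mul_one]
  have hb : |∑' n, cc (n+1) * x^(n+1)| ≤ x := by
    refine (norm_tsum_le_tsum_norm ((summable_norm_cc_pow hx).comp_injective
      (add_left_injective 1))).trans ?_
    refine Real.tsum_le_of_sum_range_le (fun n => norm_nonneg _) (fun N => ?_)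
    calc ∑ n ∈ Finset.range N, ‖cc (n+1) * x^(n+1)‖
        ≤ ∑ n ∈ Finset.range N, |cc (n+1)| * x := by
          refine Finset.sum_le_sum fun n hn => ?_
          rw [norm_mul, norm_pow, Real.norm_eq_abs, Real.norm_eq_abs,
            abs_of_nonneg h0]
          exact mul_le_mul_of_nonneg_left
            (pow_le_of_le_one h0 h1.le n.succ_ne_zero) (abs_nonneg _)
      _ = (∑ n ∈ Finset.range N, |cc (n+1)|) * x := by rw [Finset.sum_mul]
      _ ≤ 1 * x := mul_le_mul_of_nonneg_right (sum_abs_cc_le N) h0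
      _ = x := one_mul x
  have := abs_le.mp hb
  linarith

lemma hasSum_cc_sqrt {x : ℝ} (h0 : 0 ≤ x) (h1 : x < 1) :
    HasSum (fun n => cc n * x^n) (Real.sqrt (1-x)) := by
  have hx : |x| < 1 := by rw [abs_of_nonneg h0]; exact h1
  have hs := (summable_cc_pow hx).hasSum
  have hpos := tsum_cc_pos h0 h1
  have hsq : (∑' n, cc n * x^n)^2 = 1 - x := by
    rw [sq]; exact tsum_cc_sq hx
  have : Real.sqrt (1-x) = ∑' n, cc n * x^n := by
    rw [← hsq, Real.sqrt_sq hpos.le]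
  rwa [this]

open MeasureTheory intervalIntegral Real

lemma Gamma_nat_add_half (n : ℕ) :
    Real.Gamma ((n:ℝ) + 1/2) = poch (1/2) n * Real.sqrt π := by
  induction n with
  | zero => simpa [poch_zero] using Real.Gamma_one_half_eq
  | succ n ih =>
    have hne : (n:ℝ) + 1/2 ≠ 0 := by positivity
    have : ((n+1 : ℕ):ℝ) + 1/2 = ((n:ℝ) + 1/2) + 1 := by push_cast; ring
    rw [this, Real.Gamma_add_one hne, ih, poch_succ]
    push_cast
    ring

lemma betaIntegral_value (n : ℕ) :
    Complex.betaIntegral ((n:ℂ) + 1/2) (1/2)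
      = ((π * poch (1/2) n / n.factorial : ℝ) : ℂ) := by
  have hs : 0 < ((n:ℂ) + 1/2).re := by
    simp only [Complex.add_re, Complex.natCast_re]
    norm_num
    positivity
  have ht : 0 < ((1/2 : ℂ)).re := by norm_num
  have key := Complex.Gamma_mul_Gamma_eq_betaIntegral hs ht
  have hsum : (n:ℂ) + 1/2 + 1/2 = ((n:ℕ):ℂ) + 1 := by push_cast; ring
  rw [hsum, Complex.Gamma_nat_eq_factorial] at key
  have hfac : ((n.factorial : ℕ):ℂ) ≠ 0 := by
    exact_mod_cast Nat.cast_ne_zero.mpr n.factorial_ne_zero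
  have hG1 : Complex.Gamma ((n:ℂ) + 1/2) = ((Real.Gamma ((n:ℝ) + 1/2) : ℝ) : ℂ) := by
    rw [← Complex.Gamma_ofReal]
    push_cast
    ring_nf
  have hG2 : Complex.Gamma (1/2 : ℂ) = ((Real.Gamma (1/2 : ℝ) : ℝ) : ℂ) := by
    rw [← Complex.Gamma_ofReal]
    push_cast
    ring_nf
  rw [hG1, hG2, _root_.Gamma_nat_add_half, Real.Gamma_one_half_eq] at key
  have : Complex.betaIntegral ((n:ℂ) + 1/2) (1/2)
      = (((poch (1/2) n * Real.sqrt π) * Real.sqrt π : ℝ) : ℂ) / ((n.factorial : ℕ):ℂ) := by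
    rw [eq_div_iff hfac]
    push_cast
    push_cast at key
    linear_combination -key
  rw [this]
  have hss : Real.sqrt π * Real.sqrt π = π := Real.mul_self_sqrt Real.pi_pos.le
  rw [show ((poch (1/2) n * Real.sqrt π) * Real.sqrt π : ℝ) = π * poch (1/2) n by
    rw [mul_assoc, hss]; ring]
  rw [Complex.ofReal_div]
  push_cast
  ring

lemma intervalIntegrable_rpow_mul {p q a : ℝ} (hp : -1 < p) (hq : -1 < q) (ha : 0 < a) :
    IntervalIntegrable (fun z => z ^ p * (a - z) ^ q) volume 0 a := by
  have h2 : (0:ℝ) < a/2 := by linarith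
  have huIcc : Set.uIcc (0:ℝ) (a/2) = Set.Icc 0 (a/2) := Set.uIcc_of_le h2.le
  have huIcc2 : Set.uIcc (a/2) a = Set.Icc (a/2) a := Set.uIcc_of_le (by linarith)
  have h1 : IntervalIntegrable (fun z => z ^ p * (a - z) ^ q) volume 0 (a/2) := by
    refine (intervalIntegrable_rpow' hp).mul_continuousOn ?_
    rw [huIcc]
    refine ContinuousOn.rpow_const (by fun_prop) fun x hx => Or.inl ?_
    have := hx.2
    intro h
    have : a - x ≥ a/2 := by linarith [hx.2]
    linarith
  have h2' : IntervalIntegrable (fun z => z ^ p * (a - z) ^ q) volume (a/2) a := by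
    have hJ : IntervalIntegrable (fun z => (a - z) ^ q) volume (a/2) a := by
      have := (intervalIntegrable_rpow' hq : IntervalIntegrable _ volume 0 (a/2)).comp_sub_left a
      simpa [show a - a/2 = a/2 by ring] using this.symm
    refine hJ.continuousOn_mul ?_
    rw [huIcc2]
    refine ContinuousOn.rpow_const (by fun_prop) fun x hx => Or.inl ?_
    intro h
    have := hx.1
    linarith
  exact h1.trans h2'

lemma beta_val (n : ℕ) {a : ℝ} (ha : 0 < a) :
    ∫ z in (0:ℝ)..a, z ^ ((n:ℝ) - 1/2) * (a - z) ^ (-(1/2) : ℝ)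
      = a ^ n * (π * poch (1/2) n / n.factorial) := by
  have hc := Complex.betaIntegral_scaled ((n:ℂ) + 1/2) (1/2) ha
  have hint : ∫ x in (0:ℝ)..a, (x:ℂ) ^ ((n:ℂ) + 1/2 - 1) * ((a:ℂ) - x) ^ ((1/2 : ℂ) - 1)
      = ∫ x in (0:ℝ)..a,
        ((x ^ ((n:ℝ) - 1/2) * (a - x) ^ (-(1/2) : ℝ) : ℝ) : ℂ) := by
    refine intervalIntegral.integral_congr fun x hx => ?_
    rw [Set.uIcc_of_le ha.le] at hx
    have e1 : (n:ℂ) + 1/2 - 1 = (((n:ℝ) - 1/2 : ℝ) : ℂ) := by push_cast; ring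
    have e2 : (1/2 : ℂ) - 1 = ((-(1/2) : ℝ) : ℂ) := by norm_num
    rw [e1, e2, ← Complex.ofReal_sub, ← Complex.ofReal_cpow hx.1,
      ← Complex.ofReal_cpow (by linarith [hx.2] : (0:ℝ) ≤ a - x), ← Complex.ofReal_mul]
  rw [hint, intervalIntegral.integral_ofReal] at hc
  have hexp : (n:ℂ) + 1/2 + 1/2 - 1 = ((n:ℕ):ℂ) := by push_cast; ring
  rw [hexp, betaIntegral_value n] at hc
  have hpow : ((a:ℂ)) ^ ((n:ℕ):ℂ) = ((a ^ n : ℝ) : ℂ) := by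
    rw [Complex.cpow_natCast]
    push_cast
    ring
  rw [hpow, ← Complex.ofReal_mul] at hc
  exact_mod_cast hc


/-- for `0 < z₋ < z₊`,
`∫₀^{z₋} √(z₊−z)/(√z √(z₋−z)) dz = π √z₊ · F(1/2,−1/2;1;z₋/z₊)`
(`zm` stands for `z₋`, `zp` for `z₊`). -/
theorem stmt_11 (zm zp : ℝ) (h0 : 0 < zm) (h1 : zm < zp) :
    ∫ z in (0 : ℝ)..zm, Real.sqrt (zp - z) / (Real.sqrt z * Real.sqrt (zm - z))
      = Real.pi * Real.sqrt zp * gaussF (1 / 2) (-(1 / 2)) 1 (zm / zp) := by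

  have hzp : (0:ℝ) < zp := h0.trans h1
  have ht0 : 0 < zm / zp := div_pos h0 hzp
  have ht1 : zm / zp < 1 := (div_lt_one hzp).mpr h1
  set F : ℕ → ℝ → ℝ := fun n z =>
    (Real.sqrt zp * cc n / zp ^ n) * (z ^ ((n:ℝ) - 1/2) * (zm - z) ^ (-(1/2) : ℝ)) with hF
  have hp : ∀ n : ℕ, -1 < (n:ℝ) - 1/2 := fun n => by
    have : (0:ℝ) ≤ n := n.cast_nonneg; linarith
  have hq : (-1:ℝ) < -(1/2) := by norm_num
  -- integrability
  have hbase : ∀ n : ℕ, IntegrableOn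
      (fun z => z ^ ((n:ℝ) - 1/2) * (zm - z) ^ (-(1/2) : ℝ)) (Set.Ioc 0 zm) volume := by
    intro n
    exact (intervalIntegrable_iff_integrableOn_Ioc_of_le h0.le).mp
      (intervalIntegrable_rpow_mul (hp n) hq h0)
  have hInt : ∀ n : ℕ, Integrable (F n) (volume.restrict (Set.Ioc 0 zm)) := fun n =>
    ((hbase n).const_mul _)
  -- per-term integral values
  have hval : ∀ n : ℕ, ∫ z in Set.Ioc (0:ℝ) zm, z ^ ((n:ℝ) - 1/2) * (zm - z) ^ (-(1/2) : ℝ)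
      = zm ^ n * (π * poch (1/2) n / n.factorial) := by
    intro n
    rw [← intervalIntegral.integral_of_le h0.le]
    exact beta_val n h0
  have hFval : ∀ n : ℕ, ∫ z in Set.Ioc (0:ℝ) zm, F n z
      = (Real.sqrt zp * cc n / zp ^ n) * (zm ^ n * (π * poch (1/2) n / n.factorial)) := by
    intro n
    rw [hF]
    rw [MeasureTheory.integral_const_mul, hval n]
  -- norm integrals and summability
  have hnormval : ∀ n : ℕ, ∫ z in Set.Ioc (0:ℝ) zm, ‖F n z‖
      = (Real.sqrt zp * |cc n| / zp ^ n) * (zm ^ n * (π * poch (1/2) n / n.factorial)) := by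
    intro n
    have : ∀ z ∈ Set.Ioc (0:ℝ) zm, ‖F n z‖
        = (Real.sqrt zp * |cc n| / zp ^ n) * (z ^ ((n:ℝ) - 1/2) * (zm - z) ^ (-(1/2) : ℝ)) := by
      intro z hz
      have hz0 : (0:ℝ) ≤ z := hz.1.le
      have hzm : (0:ℝ) ≤ zm - z := by linarith [hz.2]
      rw [hF, Real.norm_eq_abs, abs_mul, abs_div, abs_mul,
        abs_of_nonneg (Real.sqrt_nonneg zp), abs_of_nonneg (by positivity : (0:ℝ) ≤ zp ^ n),
        abs_of_nonneg (mul_nonneg (Real.rpow_nonneg hz0 _) (Real.rpow_nonneg hzm _))]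
    rw [MeasureTheory.setIntegral_congr_fun measurableSet_Ioc this,
      MeasureTheory.integral_const_mul, hval n]
  have hsummable : Summable fun n => ∫ z in Set.Ioc (0:ℝ) zm, ‖F n z‖ := by
    have : Summable fun n : ℕ => (Real.sqrt zp * π) * (zm / zp) ^ n :=
      (summable_geometric_of_lt_one ht0.le ht1).mul_left _
    refine this.of_nonneg_of_le (fun n => MeasureTheory.integral_nonneg fun z => norm_nonneg _)
      (fun n => ?_)
    rw [hnormval n]
    have e1 : Real.sqrt zp * |cc n| / zp ^ n * (zm ^ n * (π * poch (1/2) n / n.factorial))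
        = (Real.sqrt zp * π) * ((zm/zp)^n * (|cc n| * (poch (1/2) n / n.factorial))) := by
      rw [div_pow]
      field_simp
    rw [e1]
    have hc0 : (0:ℝ) ≤ Real.sqrt zp * π := by positivity
    have h2 : |cc n| * (poch (1/2) n / n.factorial) ≤ 1 := by
      have hfp : (0:ℝ) < n.factorial := by exact_mod_cast n.factorial_pos
      have hle : poch (1/2) n / n.factorial ≤ 1 :=
        (div_le_one hfp).mpr (poch_half_le_factorial n)
      have hge : (0:ℝ) ≤ poch (1/2) n / n.factorial :=
        div_nonneg (poch_half_pos n).le hfp.le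
      calc |cc n| * (poch (1/2) n / n.factorial) ≤ 1 * 1 :=
            mul_le_mul (abs_cc_le_one n) hle hge (by norm_num)
        _ = 1 := one_mul 1
    calc Real.sqrt zp * π * ((zm/zp)^n * (|cc n| * (poch (1/2) n / n.factorial)))
        ≤ Real.sqrt zp * π * ((zm/zp)^n * 1) := by
          gcongr
      _ = Real.sqrt zp * π * (zm/zp)^n := by ring
  -- pointwise sum
  have hpt : ∀ z ∈ Set.Ioc (0:ℝ) zm,
      Real.sqrt (zp - z) / (Real.sqrt z * Real.sqrt (zm - z)) = ∑' n, F n z := by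
    intro z hz
    have hz0 : (0:ℝ) < z := hz.1
    have hzzm : z ≤ zm := hz.2
    have hx0 : (0:ℝ) ≤ z / zp := by positivity
    have hx1 : z / zp < 1 := (div_lt_one hzp).mpr (lt_of_le_of_lt hzzm h1)
    have hs := ((hasSum_cc_sqrt hx0 hx1).mul_left (Real.sqrt zp)).div_const
      (Real.sqrt z * Real.sqrt (zm - z))
    have hval2 : Real.sqrt zp * Real.sqrt (1 - z / zp) = Real.sqrt (zp - z) := by
      rw [← Real.sqrt_mul hzp.le]
      congr 1
      field_simp
    have hterm : (fun n => Real.sqrt zp * (cc n * (z/zp)^n) / (Real.sqrt z * Real.sqrt (zm - z)))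
        = fun n => F n z := by
      funext n
      simp only [hF]
      have hz1 : z ^ ((n:ℝ) - 1/2) = z ^ n / Real.sqrt z := by
        rw [Real.rpow_sub hz0, Real.rpow_natCast, Real.sqrt_eq_rpow]
      have hz2 : (zm - z) ^ (-(1/2) : ℝ) = 1 / Real.sqrt (zm - z) := by
        rw [Real.rpow_neg (by linarith : (0:ℝ) ≤ zm - z), Real.sqrt_eq_rpow]
        exact (one_div _).symm
      rw [hz1, hz2, div_pow]
      ring
    rw [hval2, hterm] at hs
    exact hs.tsum_eq.symm
  -- put it together
  have hHasSum := MeasureTheory.hasSum_integral_of_summable_integral_norm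
    (μ := volume.restrict (Set.Ioc (0:ℝ) zm)) hInt hsummable
  have hLHS : ∫ z in (0:ℝ)..zm, Real.sqrt (zp - z) / (Real.sqrt z * Real.sqrt (zm - z))
      = ∑' n, ∫ z in Set.Ioc (0:ℝ) zm, F n z := by
    rw [intervalIntegral.integral_of_le h0.le,
      MeasureTheory.setIntegral_congr_fun measurableSet_Ioc hpt]
    exact hHasSum.tsum_eq.symm
  rw [hLHS, gaussF]
  rw [show Real.pi * Real.sqrt zp * (∑' n : ℕ, poch (1/2) n * poch (-(1/2)) n /
      (poch 1 n * n.factorial) * (zm/zp) ^ n)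
    = ∑' n : ℕ, (Real.pi * Real.sqrt zp) * (poch (1/2) n * poch (-(1/2)) n /
      (poch 1 n * n.factorial) * (zm/zp) ^ n) from (tsum_mul_left).symm]
  refine tsum_congr fun n => ?_
  rw [hFval n, poch_one]
  have hfne : ((n.factorial : ℕ) : ℝ) ≠ 0 := Nat.cast_ne_zero.mpr n.factorial_ne_zero
  have hcc : cc n = poch (-(1/2)) n / n.factorial := rfl
  rw [hcc, div_pow]
  field_simp
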